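/- For any linear map L : ℝ^m → ℝ^n with n ≤ m, the supremum over all orthogonal projections π : ℝ^m → ℝ^{m−n} (i.e. surjective linear maps with π ∘ π* = I_{m−n}) of |M_n L ⌟ dπ| equals |M_n L|, where dπ = dπ^1 ∧ … ∧ dπ^{m−n}; moreover the supremum is attained by the orthogonal projection onto ker L when L has rank n. -/

import Mathlib

open MeasureTheory Filter Topology
open scoped BigOperators ENNReal MeasureTheory

noncomputable section

abbrev Pt (m : ℕ) := Fin m → ℝ

abbrev Idx (m k : ℕ) := {s : Finset (Fin m) // s.card = k}

abbrev Form (m k : ℕ) := Pt m → Idx m k → ℝ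

/-- Euclidean norm on `Fin n → ℝ`. -/
def enorm' {n : ℕ} (v : Fin n → ℝ) : ℝ := Real.sqrt (∑ i, (v i) ^ 2)

/-- Frobenius norm of a matrix. -/
def mnorm {n m : ℕ} (G : Matrix (Fin n) (Fin m) ℝ) : ℝ :=
  Real.sqrt (∑ i, ∑ j, (G i j) ^ 2)

/-- The shuffle permutation sending `(1,…,m)` to `(s, sᶜ)` (each in increasing order). -/
def shufflePerm {m : ℕ} (s : Finset (Fin m)) : Equiv.Perm (Fin m) :=
  (finCongr (Nat.add_sub_cancel' (by simpa using s.card_le_univ)).symm).trans <|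
    finSumFinEquiv.symm.trans <|
      (Equiv.sumCongr (s.orderIsoOfFin rfl).toEquiv
        (((sᶜ).orderIsoOfFin (by simp [Finset.card_compl])).toEquiv.trans
          (Equiv.subtypeEquivRight (fun x => Finset.mem_compl)))).trans
        (Equiv.sumCompl (· ∈ s))

/-- Sign of the shuffle permutation `(1,…,m) ↦ (s, sᶜ)`. -/
def shuffleSign {m : ℕ} (s : Finset (Fin m)) : ℝ :=
  ((Equiv.Perm.sign (shufflePerm s) : ℤ) : ℝ)

/-- Coefficient (w.r.t. `dx¹∧…∧dxᵐ`) of the wedge of a `p`-covector with a `q`-covector,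
`p + q = m`, both given by their coordinates on increasing multi-indices. -/
def wedgeTop {m p q : ℕ} (h : p + q = m) (α : Idx m p → ℝ) (β : Idx m q → ℝ) : ℝ :=
  ∑ s : Idx m p, shuffleSign s.1 * α s *
    β ⟨(s.1)ᶜ, by
      have hs := s.2
      simp only [Finset.card_compl, Fintype.card_fin, hs]
      omega⟩

/-- Exterior differential of a `k`-form given in coordinates. -/
def extDerivCoord {m k : ℕ} (ω : Form m k) : Form m (k + 1) :=
  fun x t => ∑ j ∈ (t.1).attach,
    ((-1 : ℝ)) ^ ((t.1.filter (fun a => a < j.1)).card) *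
      fderiv ℝ (fun y => ω y ⟨t.1.erase j.1, by
        simp [Finset.card_erase_of_mem j.2, t.2]⟩) x (Pi.single j.1 1)

/-- Smooth compactly supported test forms in an open set `Ω`. -/
def IsTestForm {m k : ℕ} (Ω : Set (Pt m)) (ω : Form m k) : Prop :=
  (∀ s, ContDiff ℝ (⊤ : ℕ∞) fun x => ω x s) ∧
    ∃ K : Set (Pt m), IsCompact K ∧ K ⊆ Ω ∧ ∀ x ∉ K, ω x = 0

/-- `G` is the weak (distributional) gradient of `u` on `Ω`; `G x i j = ∂ⱼ uⁱ (x)`. -/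
def IsWeakGradient {m n : ℕ} (Ω : Set (Pt m)) (u : Pt m → Fin n → ℝ)
    (G : Pt m → Matrix (Fin n) (Fin m) ℝ) : Prop :=
  ∀ φ : Pt m → ℝ, ContDiff ℝ (⊤ : ℕ∞) φ → HasCompactSupport φ → tsupport φ ⊆ Ω →
    ∀ i j, ∫ x in Ω, u x i * fderiv ℝ φ x (Pi.single j 1) = - ∫ x in Ω, G x i j * φ x

/-- Coordinates of the `(n-1)`-form `du² ∧ … ∧ duⁿ` built from a gradient matrix. -/
def minorForm {m n : ℕ} (G : Matrix (Fin n) (Fin m) ℝ) : Idx m (n - 1) → ℝ :=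
  fun s => Matrix.det (Matrix.of fun i j : Fin (n - 1) =>
    G ⟨i.1 + 1, by have := i.2; omega⟩ ((s.1.orderIsoOfFin s.2) j))

/-- Coordinates of the `n`-form `du¹ ∧ … ∧ duⁿ` (the n×n minors of the gradient). -/
def topMinor {m n : ℕ} (G : Matrix (Fin n) (Fin m) ℝ) : Idx m n → ℝ :=
  fun s => Matrix.det (Matrix.of fun i j : Fin n => G i ((s.1.orderIsoOfFin s.2) j))

/-- Action of the distributional Jacobian `Ju = ∂ j(u)` on an `(m-n)`-form:
`Ju(ω) = (-1)^n ∫_Ω u¹ du² ∧ … ∧ duⁿ ∧ dω`. -/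
def jacPair {m n : ℕ} (hn : 1 ≤ n) (hm : n ≤ m) (Ω : Set (Pt m))
    (u : Pt m → Fin n → ℝ) (G : Pt m → Matrix (Fin n) (Fin m) ℝ)
    (ω : Form m (m - n)) : ℝ :=
  (-1 : ℝ) ^ n * ∫ x in Ω, u x ⟨0, hn⟩ *
    wedgeTop (by omega) (minorForm (G x)) (extDerivCoord ω x)

/-- Coordinates of the simple `k`-vector `v₁ ∧ … ∧ v_k`. -/
def wedgeCoord {m k : ℕ} (v : Fin k → Pt m) : Idx m k → ℝ :=
  fun s => Matrix.det (Matrix.of fun i j : Fin k => v i ((s.1.orderIsoOfFin s.2) j))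

/-- Comass norm of a `k`-covector. -/
def comass {m k : ℕ} (φ : Idx m k → ℝ) : ℝ :=
  sSup {r | ∃ v : Fin k → Pt m, (∀ i, enorm' (v i) ≤ 1) ∧ r = ∑ s, φ s * wedgeCoord v s}

/-- Mass norm of a `k`-vector, dual to comass. -/
def massNorm {m k : ℕ} (ξ : Idx m k → ℝ) : ℝ :=
  sSup {r | ∃ φ : Idx m k → ℝ, comass φ ≤ 1 ∧ r = ∑ s, ξ s * φ s}

/-- Euclidean norm of a `k`-vector. -/
def eucNorm {m k : ℕ} (ξ : Idx m k → ℝ) : ℝ := Real.sqrt (∑ s, (ξ s) ^ 2)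

/-- The coordinates of `MₙL = (e₁∧…∧e_m) ⌟ (L¹∧…∧Lⁿ)`: the coordinate on `e_s`
is the determinant of the matrix obtained by stacking `L` on top of the rows `e^{s(i)}`. -/
def MnVecG {m n : ℕ} (hm : n ≤ m) (L : Matrix (Fin n) (Fin m) ℝ) : Idx m (m - n) → ℝ :=
  fun s => Matrix.det (Matrix.of fun i j : Fin m =>
    if h : i.1 < n then L ⟨i.1, h⟩ j
    else if (s.1.orderIsoOfFin s.2) ⟨i.1 - n, by have := i.2; omega⟩ = j then 1 else 0)

/-- `MₙL ⌟ dπ`: determinant of `L` stacked over `π`. -/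
def contractDet {m n : ℕ} (hm : n ≤ m) (L : Matrix (Fin n) (Fin m) ℝ)
    (P : Matrix (Fin (m - n)) (Fin m) ℝ) : ℝ :=
  Matrix.det (Matrix.of fun i j : Fin m =>
    if h : i.1 < n then L ⟨i.1, h⟩ j else P ⟨i.1 - n, by have := i.2; omega⟩ j)

/-- A form vanishes on a neighbourhood of each point of `S`. -/
def VanishNear {m k : ℕ} (S : Set (Pt m)) (ω : Form m k) : Prop :=
  ∀ x ∈ S, ∃ ε > 0, ∀ y ∈ Metric.ball x ε, ω y = 0

/-- `u ∈ GSB_nV(Ω)` witnessed by the data `(ρ, S)`: the Jacobian `Ju` decomposes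
as `R + T` with `R = ρ·ℒᵐ` absolutely continuous with finite mass and `T`
concentrated on a set `S` of finite `ℋ^{m-n}` measure (finite size). -/
def IsGSBRep {m n : ℕ} (hn : 1 ≤ n) (hm : n ≤ m) (Ω : Set (Pt m))
    (u : Pt m → Fin n → ℝ) (G : Pt m → Matrix (Fin n) (Fin m) ℝ)
    (ρ : Pt m → Idx m (m - n) → ℝ) (S : Set (Pt m)) : Prop :=
  Integrable (fun x => eucNorm (ρ x)) (volume.restrict Ω) ∧
  μH[((m : ℝ) - (n : ℝ))] S < ⊤ ∧
  ∀ ω : Form m (m - n), IsTestForm Ω ω → VanishNear S ω →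
    jacPair hn hm Ω u G ω = ∫ x in Ω, ∑ s, ρ x s * ω x s

end

noncomputable section
namespace Stmt1Aux

open Finset

variable {m k n : ℕ}

def emb (s : Idx m k) : Fin k → Fin m := fun j => ((s.1.orderIsoOfFin s.2) j : Fin m)

lemma emb_injective (s : Idx m k) : Function.Injective (emb s) := fun a b h =>
  (s.1.orderIsoOfFin s.2).injective (Subtype.ext h)

lemma emb_mem (s : Idx m k) (j : Fin k) : emb s j ∈ s.1 := ((s.1.orderIsoOfFin s.2) j).2

lemma image_emb (s : Idx m k) : Finset.univ.image (emb s) = s.1 := by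
  ext x
  simp only [Finset.mem_image, Finset.mem_univ, true_and]
  constructor
  · rintro ⟨j, rfl⟩; exact emb_mem s j
  · intro hx; exact ⟨(s.1.orderIsoOfFin s.2).symm ⟨x, hx⟩, by simp [emb]⟩

lemma sum_emb (s : Idx m k) (f : Fin m → ℝ) : ∑ j : Fin k, f (emb s j) = ∑ x ∈ s.1, f x := by
  rw [← image_emb s, Finset.sum_image (fun a _ b _ h => emb_injective s h)]

def idxOf (r : Fin k → Fin m) (hr : Function.Injective r) : Idx m k :=
  ⟨Finset.univ.image r, by
    rw [Finset.card_image_of_injective _ hr, Finset.card_univ, Fintype.card_fin]⟩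

def permOf (r : Fin k → Fin m) (hr : Function.Injective r) : Equiv.Perm (Fin k) :=
  Equiv.ofBijective (fun i => ((idxOf r hr).1.orderIsoOfFin (idxOf r hr).2).symm
      ⟨r i, Finset.mem_image_of_mem r (Finset.mem_univ i)⟩) <| by
    refine Finite.injective_iff_bijective.mp (fun a b hab => hr ?_)
    have := congrArg (((idxOf r hr).1.orderIsoOfFin (idxOf r hr).2)) hab
    simpa using congrArg Subtype.val this

lemma permOf_spec (r : Fin k → Fin m) (hr : Function.Injective r) (x : Fin k) :
    emb (idxOf r hr) (permOf r hr x) = r x := by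
  simp [emb, permOf, Equiv.ofBijective_apply]

lemma image_emb_perm (s : Idx m k) (τ : Equiv.Perm (Fin k)) :
    Finset.univ.image (fun i => emb s (τ i)) = s.1 := by
  ext x
  simp only [Finset.mem_image, Finset.mem_univ, true_and]
  constructor
  · rintro ⟨j, rfl⟩; exact emb_mem s _
  · intro hx
    exact ⟨τ.symm ((s.1.orderIsoOfFin s.2).symm ⟨x, hx⟩), by simp [emb]⟩

lemma sum_injective_eq {M : Type*} [AddCommMonoid M] (g : (Fin k → Fin m) → M) :
    ∑ r ∈ Finset.univ.filter (fun r : Fin k → Fin m => Function.Injective r), g r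
      = ∑ p : Idx m k × Equiv.Perm (Fin k), g (fun i => emb p.1 (p.2 i)) := by
  classical
  refine (Finset.sum_bij' (fun (p : Idx m k × Equiv.Perm (Fin k)) _ => fun i => emb p.1 (p.2 i))
    (fun r hr => ⟨idxOf r (by simpa using (Finset.mem_filter.mp hr).2),
      permOf r (by simpa using (Finset.mem_filter.mp hr).2)⟩) ?_ ?_ ?_ ?_ ?_).symm
  · intro p _
    refine Finset.mem_filter.mpr ⟨Finset.mem_univ _, ?_⟩
    exact (emb_injective p.1).comp p.2.injective
  · intro r hr
    exact Finset.mem_univ _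
  · intro p hp
    have hinj : Function.Injective (fun i => emb p.1 (p.2 i)) :=
      (emb_injective p.1).comp p.2.injective
    have h1 : idxOf (fun i => emb p.1 (p.2 i)) hinj = p.1 :=
      Subtype.ext (image_emb_perm p.1 p.2)
    refine Prod.ext ?_ ?_
    · exact h1
    · show permOf _ _ = p.2
      refine Equiv.ext fun x => ?_
      apply emb_injective p.1
      have h2 := permOf_spec (fun i => emb p.1 (p.2 i)) hinj x
      rw [show emb (idxOf (fun i => emb p.1 (p.2 i)) hinj) = emb p.1 from congrArg emb h1] at h2
      exact h2
  · intro r hr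
    funext x
    exact permOf_spec r _ x
  · intro p _
    rfl

end Stmt1Aux
end

noncomputable section
namespace Stmt1Aux

lemma alt_expand {m k : ℕ} (F : (Fin m → ℝ) [⋀^(Fin k)]→ₗ[ℝ] ℝ) (v : Fin k → (Fin m → ℝ)) :
    F v = ∑ s : Idx m k,
      Matrix.det (Matrix.of fun i j : Fin k => v i (emb s j)) *
        F (fun i => Pi.single (emb s i) 1) := by
  classical
  have hv : v = fun i => ∑ j : Fin m, v i j • (Pi.single j (1 : ℝ) : Fin m → ℝ) := by
    funext i x
    simp [Pi.single_apply, Finset.sum_ite_eq, mul_comm]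
  have h1 : F v = ∑ r : Fin k → Fin m,
      (∏ i, v i (r i)) • F (fun i => (Pi.single (r i) 1 : Fin m → ℝ)) := by
    conv_lhs => rw [hv]
    have hms := F.toMultilinearMap.map_sum (α := fun _ : Fin k => Fin m)
      (g := fun i j => v i j • (Pi.single j (1:ℝ) : Fin m → ℝ))
    rw [show F (fun i => ∑ j : Fin m, v i j • (Pi.single j (1:ℝ) : Fin m → ℝ))
        = F.toMultilinearMap (fun i => ∑ j : Fin m, v i j • (Pi.single j (1:ℝ) : Fin m → ℝ))
        from rfl, hms]
    refine Finset.sum_congr rfl fun r _ => ?_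
    exact F.toMultilinearMap.map_smul_univ (fun i => v i (r i))
      (fun i => (Pi.single (r i) 1 : Fin m → ℝ))
  rw [h1]
  rw [← Finset.sum_filter_add_sum_filter_not Finset.univ (fun r : Fin k → Fin m =>
    Function.Injective r)]
  have h2 : ∑ r ∈ Finset.univ.filter (fun r : Fin k → Fin m => ¬ Function.Injective r),
      (∏ i, v i (r i)) • F (fun i => (Pi.single (r i) 1 : Fin m → ℝ)) = 0 := by
    refine Finset.sum_eq_zero fun r hr => ?_
    have hni : ¬ Function.Injective r := by simpa using (Finset.mem_filter.mp hr).2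
    have hni' : ¬ Function.Injective (fun i => (Pi.single (r i) 1 : Fin m → ℝ)) := by
      intro hinj
      exact hni fun a b hab => hinj (by simp [hab])
    rw [F.map_eq_zero_of_not_injective _ hni', smul_zero]
  rw [h2, add_zero, sum_injective_eq]
  rw [Fintype.sum_prod_type]
  refine Finset.sum_congr rfl fun s _ => ?_
  have h3 : ∀ τ : Equiv.Perm (Fin k),
      F (fun i => (Pi.single (emb s (τ i)) 1 : Fin m → ℝ))
        = (Equiv.Perm.sign τ : ℤ) • F (fun i => (Pi.single (emb s i) 1 : Fin m → ℝ)) :=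
    fun τ => F.map_perm (fun i => (Pi.single (emb s i) 1 : Fin m → ℝ)) τ
  calc ∑ τ : Equiv.Perm (Fin k),
        (∏ i, v i (emb s (τ i))) • F (fun i => (Pi.single (emb s (τ i)) 1 : Fin m → ℝ))
      = ∑ τ : Equiv.Perm (Fin k), (((Equiv.Perm.sign τ : ℤ) : ℝ) * ∏ i, v i (emb s (τ i)))
          • F (fun i => (Pi.single (emb s i) 1 : Fin m → ℝ)) := by
        refine Finset.sum_congr rfl fun τ _ => ?_
        rw [h3 τ, smul_comm, ← smul_assoc]
        congr 1
        simp [zsmul_eq_mul]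
    _ = (∑ τ : Equiv.Perm (Fin k), ((Equiv.Perm.sign τ : ℤ) : ℝ) * ∏ i, v i (emb s (τ i)))
          • F (fun i => (Pi.single (emb s i) 1 : Fin m → ℝ)) := by rw [Finset.sum_smul]
    _ = Matrix.det (Matrix.of fun i j : Fin k => v i (emb s j)) *
          F (fun i => Pi.single (emb s i) 1) := by
        rw [smul_eq_mul]
        congr 1
        rw [← Matrix.det_transpose, Matrix.det_apply]
        refine Finset.sum_congr rfl fun τ _ => ?_
        rw [Units.smul_def, zsmul_eq_mul]
        norm_num

end Stmt1Aux
end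

noncomputable section
namespace Stmt1Aux

variable {m n : ℕ}

def stk (hm : n ≤ m) (L : Matrix (Fin n) (Fin m) ℝ) (v : Fin (m - n) → Fin m → ℝ) :
    Matrix (Fin m) (Fin m) ℝ :=
  Matrix.of fun i j => if h : i.1 < n then L ⟨i.1, h⟩ j
    else v ⟨i.1 - n, by have := i.2; omega⟩ j

lemma stk_update [DecidableEq (Fin (m - n))] (hm : n ≤ m) (L : Matrix (Fin n) (Fin m) ℝ) (v : Fin (m - n) → Fin m → ℝ)
    (i0 : Fin (m - n)) (x : Fin m → ℝ) :
    stk hm L (Function.update v i0 x)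
      = (stk hm L v).updateRow ⟨n + i0.1, by have := i0.2; omega⟩ x := by
  ext i j
  simp only [stk, Matrix.of_apply, Matrix.updateRow_apply, Function.update_apply,
    Fin.ext_iff]
  by_cases h : i.1 < n
  · rw [dif_pos h, if_neg (by omega), dif_pos h]
  · rw [dif_neg h, dif_neg h]
    by_cases h2 : i.1 = n + i0.1
    · rw [if_pos (by omega), if_pos (by omega)]
    · rw [if_neg (by omega), if_neg (by omega)]

def stackAlt (hm : n ≤ m) (L : Matrix (Fin n) (Fin m) ℝ) :
    (Fin m → ℝ) [⋀^(Fin (m - n))]→ₗ[ℝ] ℝ :=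
  { toMultilinearMap :=
    { toFun := fun v => (stk hm L v).det
      map_update_add' := by
        intro _ v i x y
        simp only [stk_update, Matrix.det_updateRow_add]
      map_update_smul' := by
        intro _ v i c x
        simp only [stk_update, Matrix.det_updateRow_smul, smul_eq_mul] }
    map_eq_zero_of_eq' := by
      intro v i j hij hne
      refine Matrix.det_zero_of_row_eq
        (i := (⟨n + i.1, by have := i.2; omega⟩ : Fin m))
        (j := (⟨n + j.1, by have := j.2; omega⟩ : Fin m)) ?_ ?_
      · intro e; rw [Fin.ext_iff] at e; simp at e; exact hne (Fin.ext e)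
      · funext jj
        simp only [stk, Matrix.of_apply]
        rw [dif_neg (by simp), dif_neg (by simp)]
        simp only [Nat.add_sub_cancel_left, Fin.eta]
        rw [hij] }

lemma stackAlt_apply (hm : n ≤ m) (L : Matrix (Fin n) (Fin m) ℝ) (v : Fin (m-n) → Fin m → ℝ) :
    stackAlt hm L v = (stk hm L v).det := rfl

lemma contractDet_eq (hm : n ≤ m) (L : Matrix (Fin n) (Fin m) ℝ)
    (P : Matrix (Fin (m - n)) (Fin m) ℝ) :
    contractDet hm L P = stackAlt hm L (fun i => P i) := rfl

lemma MnVecG_eq (hm : n ≤ m) (L : Matrix (Fin n) (Fin m) ℝ) (s : Idx m (m - n)) :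
    MnVecG hm L s = stackAlt hm L (fun i => Pi.single (emb s i) 1) := by
  rw [stackAlt_apply]
  unfold MnVecG
  congr 1
  ext i j
  by_cases h : i.1 < n
  · simp [stk, h]
  · simp [stk, h, Pi.single_apply, eq_comm, emb]

lemma contractDet_expand (hm : n ≤ m) (L : Matrix (Fin n) (Fin m) ℝ)
    (P : Matrix (Fin (m - n)) (Fin m) ℝ) :
    contractDet hm L P = ∑ s : Idx m (m - n),
      (Matrix.of fun i j : Fin (m - n) => P i (emb s j)).det * MnVecG hm L s := by
  rw [contractDet_eq, alt_expand]
  exact Finset.sum_congr rfl fun s _ => by rw [MnVecG_eq]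

lemma cauchy_binet {k : ℕ} (A : Matrix (Fin k) (Fin m) ℝ) (B : Matrix (Fin m) (Fin k) ℝ) :
    (A * B).det = ∑ s : Idx m k,
      (Matrix.of fun i j : Fin k => A i (emb s j)).det *
      (Matrix.of fun i j : Fin k => B (emb s i) j).det := by
  classical
  have h1 : (Matrix.detRowAlternating.compLinearMap B.vecMulLinear) (fun i => A i)
      = (A * B).det := by
    simp only [AlternatingMap.compLinearMap_apply, Matrix.vecMulLinear_apply]
    rfl
  have h2 : ∀ s : Idx m k,
      (Matrix.detRowAlternating.compLinearMap B.vecMulLinear)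
        (fun i => (Pi.single (emb s i) 1 : Fin m → ℝ))
      = (Matrix.of fun i j : Fin k => B (emb s i) j).det := by
    intro s
    simp only [AlternatingMap.compLinearMap_apply, Matrix.vecMulLinear_apply]
    show Matrix.detRowAlternating _ = Matrix.detRowAlternating _
    congr 1
    funext i j
    simp [Matrix.single_vecMul]
  rw [← h1, alt_expand]
  exact Finset.sum_congr rfl fun s _ => by rw [h2]

end Stmt1Aux
end

noncomputable section
namespace Stmt1Aux

open Matrix

variable {m n k : ℕ}

def sumEquiv (hm : n ≤ m) : Fin n ⊕ Fin (m - n) ≃ Fin m :=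
  finSumFinEquiv.trans (finCongr (Nat.add_sub_cancel' hm))

lemma sumEquiv_inl (hm : n ≤ m) (i : Fin n) : ((sumEquiv hm) (Sum.inl i)).1 = i.1 := by
  simp [sumEquiv]

lemma sumEquiv_inr (hm : n ≤ m) (i : Fin (m - n)) : ((sumEquiv hm) (Sum.inr i)).1 = n + i.1 := by
  simp [sumEquiv]

lemma stk_row (hm : n ≤ m) (L : Matrix (Fin n) (Fin m) ℝ) (v : Fin (m - n) → Fin m → ℝ)
    (a : Fin n ⊕ Fin (m - n)) (j : Fin m) :
    stk hm L v (sumEquiv hm a) j = Sum.elim (fun i => L i j) (fun i => v i j) a := by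
  rcases a with i | i
  · have h : ((sumEquiv hm) (Sum.inl i)).1 = i.1 := sumEquiv_inl hm i
    simp only [Sum.elim_inl, stk, Matrix.of_apply]
    rw [dif_pos (by rw [h]; exact i.2)]
    simp only [h, Fin.eta]
  · have h : ((sumEquiv hm) (Sum.inr i)).1 = n + i.1 := sumEquiv_inr hm i
    simp only [Sum.elim_inr, stk, Matrix.of_apply]
    rw [dif_neg (by rw [h]; omega)]
    simp only [h, Nat.add_sub_cancel_left, Fin.eta]

lemma det_stk_sq (hm : n ≤ m) (L : Matrix (Fin n) (Fin m) ℝ)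
    (P : Matrix (Fin (m - n)) (Fin m) ℝ) :
    (stk hm L (fun i => P i)).det ^ 2
      = (Matrix.fromBlocks (L * Lᵀ) (L * Pᵀ) (P * Lᵀ) (P * Pᵀ)).det := by
  have h1 : (stk hm L (fun i => P i)).det ^ 2
      = ((stk hm L (fun i => P i)) * (stk hm L (fun i => P i))ᵀ).det := by
    rw [Matrix.det_mul, Matrix.det_transpose, sq]
  rw [h1, ← Matrix.det_submatrix_equiv_self (sumEquiv hm)]
  congr 1
  ext a b
  rcases a with i | i <;> rcases b with j | j <;>
    simp [Matrix.submatrix_apply, Matrix.mul_apply, Matrix.transpose_apply, stk_row]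

lemma det_stk_of_orth (hm : n ≤ m) (L : Matrix (Fin n) (Fin m) ℝ)
    (P : Matrix (Fin (m - n)) (Fin m) ℝ) (hP : P * Pᵀ = 1) :
    (stk hm L (fun i => P i)).det ^ 2 = (L * Lᵀ - (L * Pᵀ) * (P * Lᵀ)).det := by
  rw [det_stk_sq, hP, Matrix.det_fromBlocks_one₂₂]

def esMat (s : Idx m k) : Matrix (Fin k) (Fin m) ℝ :=
  Matrix.of fun i j => if emb s i = j then 1 else 0

lemma MnVecG_det (hm : n ≤ m) (L : Matrix (Fin n) (Fin m) ℝ) (s : Idx m (m - n)) :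
    MnVecG hm L s = (stk hm L (fun i => esMat s i)).det := rfl

lemma esMat_orth (s : Idx m k) : esMat s * (esMat s)ᵀ = 1 := by
  ext a b
  simp only [Matrix.mul_apply, Matrix.transpose_apply, esMat, Matrix.of_apply, ite_mul,
    one_mul, zero_mul, Finset.sum_ite_eq, Finset.mem_univ, if_true, Matrix.one_apply]
  by_cases hab : a = b
  · simp [hab]
  · rw [if_neg fun h => hab ((emb_injective s h).symm), if_neg hab]

lemma mul_esMat_T (L : Matrix (Fin n) (Fin m) ℝ) (s : Idx m k) :
    L * (esMat s)ᵀ = Matrix.of (fun (i : Fin n) (j : Fin k) => L i (emb s j)) := by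
  ext i j
  simp [Matrix.mul_apply, Matrix.transpose_apply, esMat, mul_ite, Finset.sum_ite_eq']

lemma esMat_mul (L : Matrix (Fin n) (Fin m) ℝ) (s : Idx m k) :
    esMat s * Lᵀ = Matrix.of (fun (j : Fin k) (i : Fin n) => L i (emb s j)) := by
  ext j i
  simp [Matrix.mul_apply, Matrix.transpose_apply, esMat, ite_mul, Finset.sum_ite_eq]

def cIdx (hm : n ≤ m) (s : Idx m (m - n)) : Idx m n :=
  ⟨s.1ᶜ, by rw [Finset.card_compl, s.2, Fintype.card_fin]; omega⟩

def cEquiv (hm : n ≤ m) : Idx m (m - n) ≃ Idx m n where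
  toFun := cIdx hm
  invFun t := ⟨t.1ᶜ, by rw [Finset.card_compl, t.2, Fintype.card_fin]⟩
  left_inv s := Subtype.ext (compl_compl _)
  right_inv t := Subtype.ext (compl_compl _)

lemma gram_split (hm : n ≤ m) (L : Matrix (Fin n) (Fin m) ℝ) (s : Idx m (m - n)) :
    L * Lᵀ - (L * (esMat s)ᵀ) * ((esMat s) * Lᵀ)
      = (Matrix.of fun (i : Fin n) (j : Fin n) => L i (emb (cIdx hm s) j))
        * (Matrix.of fun (i : Fin n) (j : Fin n) => L i (emb (cIdx hm s) j))ᵀ := by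
  rw [mul_esMat_T, esMat_mul]
  ext i i'
  simp only [Matrix.sub_apply, Matrix.mul_apply, Matrix.transpose_apply, Matrix.of_apply]
  rw [sum_emb (cIdx hm s) (fun x => L i x * L i' x), sum_emb s (fun x => L i x * L i' x)]
  have hc := Finset.sum_add_sum_compl s.1 (fun x => L i x * L i' x)
  have : ((cIdx hm s).1 : Finset (Fin m)) = s.1ᶜ := rfl
  rw [this]
  linarith

lemma MnVec_sq (hm : n ≤ m) (L : Matrix (Fin n) (Fin m) ℝ) (s : Idx m (m - n)) :
    (MnVecG hm L s) ^ 2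
      = ((Matrix.of fun (i : Fin n) (j : Fin n) => L i (emb (cIdx hm s) j))
        * (Matrix.of fun (i : Fin n) (j : Fin n) => L i (emb (cIdx hm s) j))ᵀ).det := by
  rw [MnVecG_det, det_stk_of_orth hm L (esMat s) (esMat_orth s), gram_split]

lemma transpose_of_emb (A : Matrix (Fin k) (Fin m) ℝ) (t : Idx m k) :
    (Matrix.of fun (i : Fin k) (j : Fin k) => Aᵀ (emb t i) j)
      = (Matrix.of fun (i : Fin k) (j : Fin k) => A i (emb t j))ᵀ := rfl

lemma cauchy_binet_self (A : Matrix (Fin k) (Fin m) ℝ) :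
    (A * Aᵀ).det = ∑ t : Idx m k, (Matrix.of fun (i : Fin k) (j : Fin k) => A i (emb t j)).det ^ 2 := by
  rw [cauchy_binet A Aᵀ]
  refine Finset.sum_congr rfl fun t _ => ?_
  rw [transpose_of_emb, Matrix.det_transpose, sq]

lemma sum_MnVec_sq (hm : n ≤ m) (L : Matrix (Fin n) (Fin m) ℝ) :
    ∑ s : Idx m (m - n), (MnVecG hm L s) ^ 2 = (L * Lᵀ).det := by
  rw [cauchy_binet_self L, ← Equiv.sum_comp (cEquiv hm)
    (fun t : Idx m n => (Matrix.of fun (i : Fin n) (j : Fin n) => L i (emb t j)).det ^ 2)]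
  refine Finset.sum_congr rfl fun s _ => ?_
  rw [MnVec_sq hm L s, Matrix.det_mul, Matrix.det_transpose, sq]
  rfl

lemma eucNorm_MnVec_sq (hm : n ≤ m) (L : Matrix (Fin n) (Fin m) ℝ) :
    eucNorm (MnVecG hm L) = Real.sqrt ((L * Lᵀ).det) := by
  rw [eucNorm, ← sum_MnVec_sq hm L]

end Stmt1Aux
end

noncomputable section
namespace Stmt1Aux

open Matrix

variable {m n : ℕ}

lemma sum_w_sq (hm : n ≤ m) (P : Matrix (Fin (m - n)) (Fin m) ℝ) (hP : P * Pᵀ = 1) :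
    ∑ s : Idx m (m - n),
      (Matrix.of fun (i : Fin (m - n)) (j : Fin (m - n)) => P i (emb s j)).det ^ 2 = 1 := by
  rw [← cauchy_binet_self P, hP, Matrix.det_one]

lemma abs_contract_le (hm : n ≤ m) (L : Matrix (Fin n) (Fin m) ℝ)
    (P : Matrix (Fin (m - n)) (Fin m) ℝ) (hP : P * Pᵀ = 1) :
    |contractDet hm L P| ≤ eucNorm (MnVecG hm L) := by
  have hcs := Finset.sum_mul_sq_le_sq_mul_sq Finset.univ
    (fun s : Idx m (m - n) =>
      (Matrix.of fun (i : Fin (m - n)) (j : Fin (m - n)) => P i (emb s j)).det)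
    (fun s => MnVecG hm L s)
  rw [sum_w_sq hm P hP, one_mul] at hcs
  have h2 : contractDet hm L P ^ 2 ≤ ∑ s : Idx m (m - n), MnVecG hm L s ^ 2 := by
    rw [contractDet_expand hm L P]; exact hcs
  calc |contractDet hm L P| = Real.sqrt (contractDet hm L P ^ 2) :=
        (Real.sqrt_sq_eq_abs _).symm
    _ ≤ Real.sqrt (∑ s : Idx m (m - n), MnVecG hm L s ^ 2) := Real.sqrt_le_sqrt h2
    _ = eucNorm (MnVecG hm L) := rfl

lemma abs_contract_eq (hm : n ≤ m) (L : Matrix (Fin n) (Fin m) ℝ)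
    (P : Matrix (Fin (m - n)) (Fin m) ℝ) (hP : P * Pᵀ = 1) (hLP : L * Pᵀ = 0) :
    |contractDet hm L P| = eucNorm (MnVecG hm L) := by
  have hPL : P * Lᵀ = 0 := by
    have := congrArg Matrix.transpose hLP
    rwa [Matrix.transpose_mul, Matrix.transpose_transpose, Matrix.transpose_zero] at this
  have h1 : contractDet hm L P ^ 2 = (L * Lᵀ).det := by
    rw [show contractDet hm L P = (stk hm L (fun i => P i)).det from rfl,
      det_stk_of_orth hm L P hP, hLP, hPL]
    simp
  calc |contractDet hm L P| = Real.sqrt (contractDet hm L P ^ 2) :=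
        (Real.sqrt_sq_eq_abs _).symm
    _ = Real.sqrt ((L * Lᵀ).det) := by rw [h1]
    _ = eucNorm (MnVecG hm L) := (eucNorm_MnVec_sq hm L).symm

lemma stk_det_zero (hm : n ≤ m) {L : Matrix (Fin n) (Fin m) ℝ} (hr : L.rank < n)
    (v : Fin (m - n) → Fin m → ℝ) : (stk hm L v).det = 0 := by
  classical
  have hkerne : LinearMap.ker (Lᵀ).mulVecLin ≠ ⊥ := by
    intro hbot
    have h1 := LinearMap.finrank_range_add_finrank_ker (Lᵀ).mulVecLin
    have h2 : Module.finrank ℝ (Fin n → ℝ) = n := by simp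
    have h3 : Module.finrank ℝ (LinearMap.range (Lᵀ).mulVecLin) = Lᵀ.rank := rfl
    have h4 : Lᵀ.rank = L.rank := Matrix.rank_transpose L
    rw [hbot] at h1
    simp only [finrank_bot] at h1
    omega
  obtain ⟨c, hcmem, hc0⟩ := Submodule.exists_mem_ne_zero_of_ne_bot hkerne
  have hc : Lᵀ.mulVec c = 0 := hcmem
  set w : Fin m → ℝ := fun i => if h : i.1 < n then c ⟨i.1, h⟩ else 0 with hwdef
  have hw0 : w ≠ 0 := by
    intro h0
    apply hc0
    funext i
    have hcf := congrFun h0 ⟨i.1, by have := i.2; omega⟩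
    simpa [w, i.isLt] using hcf
  have hvm : w ᵥ* (stk hm L v) = 0 := by
    funext j
    show ∑ i, w i * stk hm L v i j = 0
    rw [← Equiv.sum_comp (sumEquiv hm) (fun i => w i * stk hm L v i j), Fintype.sum_sum_type]
    have hA : ∀ i : Fin n, w (sumEquiv hm (Sum.inl i)) = c i := by
      intro i
      have h := sumEquiv_inl hm i
      simp only [w]
      rw [dif_pos (by rw [h]; exact i.2)]
      simp only [h, Fin.eta]
    have hB : ∀ i : Fin (m - n), w (sumEquiv hm (Sum.inr i)) = 0 := by
      intro i
      have h := sumEquiv_inr hm i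
      simp only [w]
      rw [dif_neg (by rw [h]; omega)]
    have hstk := stk_row hm L v
    calc (∑ i : Fin n, w (sumEquiv hm (Sum.inl i)) * stk hm L v (sumEquiv hm (Sum.inl i)) j)
          + ∑ i : Fin (m - n), w (sumEquiv hm (Sum.inr i)) * stk hm L v (sumEquiv hm (Sum.inr i)) j
        = ∑ i : Fin n, c i * L i j := by
          rw [show (∑ i : Fin (m - n), w (sumEquiv hm (Sum.inr i))
              * stk hm L v (sumEquiv hm (Sum.inr i)) j) = 0 from
            Finset.sum_eq_zero fun i _ => by rw [hB i, zero_mul]]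
          rw [add_zero]
          exact Finset.sum_congr rfl fun i _ => by rw [hA i, hstk (Sum.inl i) j, Sum.elim_inl]
      _ = 0 := by
          have := congrFun hc j
          simpa [Matrix.mulVec, dotProduct, Matrix.transpose_apply, mul_comm] using this
  exact Matrix.exists_vecMul_eq_zero_iff.mp ⟨w, hw0, hvm⟩

lemma eucNorm_zero_of_rank_lt (hm : n ≤ m) {L : Matrix (Fin n) (Fin m) ℝ} (hr : L.rank < n) :
    eucNorm (MnVecG hm L) = 0 := by
  have hz : ∀ s : Idx m (m - n), MnVecG hm L s = 0 := fun s => by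
    rw [MnVecG_det]; exact stk_det_zero hm hr _
  simp [eucNorm, hz]

lemma exists_proj (hm : n ≤ m) (L : Matrix (Fin n) (Fin m) ℝ) (hrank : L.rank = n) :
    ∃ π : Matrix (Fin (m - n)) (Fin m) ℝ, π * πᵀ = 1 ∧ L * πᵀ = 0 := by
  classical
  let f : EuclideanSpace ℝ (Fin m) →ₗ[ℝ] (Fin n → ℝ) :=
    L.mulVecLin.comp (WithLp.linearEquiv 2 ℝ (Fin m → ℝ)).toLinearMap
  have hker : Module.finrank ℝ (LinearMap.ker f) = m - n := by
    have h1 := LinearMap.finrank_range_add_finrank_ker f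
    have h2 : LinearMap.range f = LinearMap.range L.mulVecLin := by
      rw [LinearMap.range_comp, LinearEquiv.range, Submodule.map_top]
    have h3 : Module.finrank ℝ (EuclideanSpace ℝ (Fin m)) = m := by simp
    have h4 : Module.finrank ℝ (LinearMap.range L.mulVecLin) = L.rank := rfl
    rw [h2, h3] at h1
    omega
  let B := stdOrthonormalBasis ℝ (LinearMap.ker f)
  let e : Fin (m - n) ≃ Fin (Module.finrank ℝ (LinearMap.ker f)) := (finCongr hker).symm
  refine ⟨Matrix.of (fun k j => ((B (e k)) : EuclideanSpace ℝ (Fin m)) j), ?_, ?_⟩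
  · ext a b
    have horth := B.orthonormal
    rw [orthonormal_iff_ite] at horth
    have hab := horth (e a) (e b)
    rw [Submodule.coe_inner, PiLp.inner_apply] at hab
    simp only [RCLike.inner_apply, conj_trivial] at hab
    simp only [Matrix.mul_apply, Matrix.transpose_apply, Matrix.of_apply, Matrix.one_apply]
    refine Eq.trans (Finset.sum_congr rfl fun j _ => mul_comm _ _) (hab.trans ?_)
    exact if_congr (EmbeddingLike.apply_eq_iff_eq e) rfl rfl
  · ext i kk
    simp only [Matrix.mul_apply, Matrix.transpose_apply, Matrix.of_apply, Matrix.zero_apply]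
    have hmem := (B (e kk)).2
    have : f ((B (e kk)) : EuclideanSpace ℝ (Fin m)) = 0 := hmem
    have hmv : L.mulVec ((B (e kk)) : EuclideanSpace ℝ (Fin m)) = 0 := this
    have := congrFun hmv i
    simpa [Matrix.mulVec, dotProduct] using this

end Stmt1Aux
end

noncomputable section

/-- For any `L : ℝᵐ → ℝⁿ` (`n ≤ m`), the supremum over orthogonal
projections `π : ℝᵐ → ℝ^{m-n}` (i.e. `π ∘ π* = I`) of `|MₙL ⌟ dπ|` equals the Euclidean
norm `|MₙL|`; moreover if `rank L = n` the supremum is attained at any orthogonal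
projection onto `ker L` (characterized by `π π* = I` and `L π* = 0`), and such a
projection exists. -/
theorem stmt1 {m n : ℕ} (hn : 1 ≤ n) (hm : n ≤ m) (L : Matrix (Fin n) (Fin m) ℝ) :
    sSup {r : ℝ | ∃ π : Matrix (Fin (m - n)) (Fin m) ℝ,
        π * π.transpose = 1 ∧ r = |contractDet hm L π|} = eucNorm (MnVecG hm L) ∧
    (L.rank = n →
      (∃ π : Matrix (Fin (m - n)) (Fin m) ℝ, π * π.transpose = 1 ∧ L * π.transpose = 0) ∧
      ∀ π : Matrix (Fin (m - n)) (Fin m) ℝ, π * π.transpose = 1 → L * π.transpose = 0 →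
        |contractDet hm L π| = eucNorm (MnVecG hm L)) := by
  classical
  have hub : ∀ r ∈ {r : ℝ | ∃ π : Matrix (Fin (m - n)) (Fin m) ℝ,
      π * π.transpose = 1 ∧ r = |contractDet hm L π|}, r ≤ eucNorm (MnVecG hm L) := by
    rintro r ⟨π, hπ, rfl⟩
    exact Stmt1Aux.abs_contract_le hm L π hπ
  have hmem : eucNorm (MnVecG hm L) ∈ {r : ℝ | ∃ π : Matrix (Fin (m - n)) (Fin m) ℝ,
      π * π.transpose = 1 ∧ r = |contractDet hm L π|} := by
    have hrle : L.rank ≤ n := (Matrix.rank_le_card_height L).trans (by simp)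
    rcases lt_or_eq_of_le hrle with hr | hr
    · obtain ⟨t, -, ht⟩ := Finset.exists_subset_card_eq
        (show m - n ≤ (Finset.univ : Finset (Fin m)).card by simp)
      refine ⟨Stmt1Aux.esMat ⟨t, ht⟩, Stmt1Aux.esMat_orth _, ?_⟩
      rw [show contractDet hm L (Stmt1Aux.esMat ⟨t, ht⟩)
          = (Stmt1Aux.stk hm L (fun i => Stmt1Aux.esMat ⟨t, ht⟩ i)).det from rfl,
        Stmt1Aux.stk_det_zero hm hr, abs_zero, Stmt1Aux.eucNorm_zero_of_rank_lt hm hr]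
    · obtain ⟨π, h1, h2⟩ := Stmt1Aux.exists_proj hm L hr
      exact ⟨π, h1, (Stmt1Aux.abs_contract_eq hm L π h1 h2).symm⟩
  refine ⟨le_antisymm (csSup_le ⟨_, hmem⟩ hub) (le_csSup ⟨_, hub⟩ hmem), fun hrank => ?_⟩
  exact ⟨Stmt1Aux.exists_proj hm L hrank,
    fun π h1 h2 => Stmt1Aux.abs_contract_eq hm L π h1 h2⟩

end
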